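/- Let p be an odd prime and let U_{p+1} be the group of upper unitriangular (p+1)×(p+1) matrices over ℤ/p. For b ∈ ℤ/p, let B = I + b·(E_{1,2}+E_{2,3}+...+E_{p-1,p}) + b'·E_{p,p+1} for some b' ∈ ℤ/p. Then B^p = I + c·E_{1,p+1} for some c ∈ ℤ/p (i.e., the p-th power of B lies in the subgroup I + E_{1,p+1}·ℤ/p). -/

import Mathlib

open Finset in
lemma superdiag_pow {R : Type*} [CommRing R] {n : ℕ} (g : ℕ → R) (k : ℕ) :
    ∀ i j : Fin n,
    ((Matrix.of (fun (i j : Fin n) => if (j : ℕ) = (i : ℕ) + 1 then g i else 0)) ^ k) i j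
      = if (j : ℕ) = (i : ℕ) + k then ∏ t ∈ Finset.range k, g (i + t) else 0 := by
  induction k with
  | zero =>
    intro i j
    simp only [pow_zero, Matrix.one_apply, Finset.range_zero, Finset.prod_empty, Nat.add_zero]
    by_cases h : i = j
    · subst h; simp
    · rw [if_neg h, if_neg (fun hh => h (Fin.ext hh.symm))]
  | succ k ih =>
    intro i j
    rw [pow_succ, Matrix.mul_apply]
    simp only [ih, Matrix.of_apply]
    by_cases h : (j : ℕ) = (i : ℕ) + (k + 1)
    · have hik : (i : ℕ) + k < n := by have := j.isLt; omega
      rw [if_pos h, Finset.sum_eq_single (⟨(i : ℕ) + k, hik⟩ : Fin n)]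
      · rw [if_pos rfl, if_pos (show (j : ℕ) = ((⟨(i : ℕ) + k, hik⟩ : Fin n) : ℕ) + 1 by
          simp; omega), Finset.prod_range_succ]
      · intro l _ hl
        rw [if_neg (fun hc => hl (Fin.ext hc)), zero_mul]
      · intro hmem; exact absurd (Finset.mem_univ _) hmem
    · rw [if_neg h]
      apply Finset.sum_eq_zero
      intro l _
      by_cases hc : (l : ℕ) = (i : ℕ) + k
      · rw [if_neg (show ¬((j : ℕ) = (l : ℕ) + 1) by omega), mul_zero]
      · rw [if_neg hc, zero_mul]

theorem stmt11 (p : ℕ) [Fact p.Prime] (hodd : Odd p) (b b' : ZMod p) :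
    let B : Matrix (Fin (p + 1)) (Fin (p + 1)) (ZMod p) :=
      1 + Matrix.of (fun (i j : Fin (p + 1)) =>
        if (j : ℕ) = (i : ℕ) + 1 then (if (i : ℕ) + 1 < p then b else b') else 0)
    ∃ c : ZMod p, B ^ p = 1 + c • Matrix.single 0 (Fin.last p) 1 := by
  intro B
  set g : ℕ → ZMod p := fun m => if m + 1 < p then b else b' with hg
  have hN : B = 1 + Matrix.of (fun (i j : Fin (p + 1)) =>
      if (j : ℕ) = (i : ℕ) + 1 then g i else 0) := rfl
  set N : Matrix (Fin (p + 1)) (Fin (p + 1)) (ZMod p) :=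
    Matrix.of (fun (i j : Fin (p + 1)) => if (j : ℕ) = (i : ℕ) + 1 then g i else 0) with hNdef
  refine ⟨∏ t ∈ Finset.range p, g t, ?_⟩
  have hchar : CharP (Matrix (Fin (p + 1)) (Fin (p + 1)) (ZMod p)) p := by infer_instance
  have hB : B ^ p = 1 + N ^ p := by
    rw [hN, add_pow_char_of_commute p (Commute.one_left N), one_pow]
  rw [hB]
  congr 1
  ext i j
  rw [superdiag_pow g p i j]
  by_cases h : (j : ℕ) = (i : ℕ) + p
  · have hi : (i : ℕ) = 0 := by have := j.isLt; omega
    have hi0 : i = 0 := Fin.ext hi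
    have hj : j = Fin.last p := Fin.ext (by simp [h, hi])
    rw [if_pos h, hi0, hj]
    simp [Matrix.single_apply_same, hi]
  · rw [if_neg h]
    have : ¬ (i = 0 ∧ j = Fin.last p) := by
      rintro ⟨rfl, rfl⟩; simp at h
    rw [Matrix.smul_apply, Matrix.single_apply_of_ne]
    · simp
    · tauto
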